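/- arXiv:1103.0495 — 2 statements merged into one kernel-verified Lean document; each statement's English description precedes it below -/
import Mathlib

section
/- Let α > 0 and let (u₁,…,u_n) ∈ (0,∞)ⁿ be a positive solution of the discrete system (Sα). Assume the standing hypotheses (H1)–(H3). Define C₁(α) := G⁻¹(G(g⁻¹(α/√(1−d))) + α²/2), M := g₁′(C₁(α)), and Ĉ(α) := 1 + g₂′(C₁(α))·α² / (2·g₂(g⁻¹(α)/e^M)·G′(g⁻¹(α)/e^M)). Then u₁ < g⁻¹(α·Ĉ(α)) and u_n < G⁻¹(G(g⁻¹(α·Ĉ(α))) + α²/2). -/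
noncomputable section

/-- `Useq g1 h k` is the function `U_{k+1}` (0-indexed version of the recursion). -/
def Useq (g1 : ℝ → ℝ) (h : ℝ) : ℕ → ℝ → ℝ
  | 0 => fun x => x
  | 1 => fun x => x + h ^ 2 / 2 * g1 x
  | k + 2 => fun x =>
      2 * Useq g1 h (k + 1) x - Useq g1 h k x + h ^ 2 * g1 (Useq g1 h (k + 1) x)

/-- `discU g1 h k` is the function `U_k` from the paper, for `1 ≤ k`. -/
def discU (g1 : ℝ → ℝ) (h : ℝ) (k : ℕ) : ℝ → ℝ := Useq g1 h (k - 1)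

/-- The function `A(u₁)` from the paper. -/
def discA (g1 g2 : ℝ → ℝ) (h : ℝ) (n : ℕ) (x : ℝ) : ℝ :=
  ((discU g1 h n x - discU g1 h (n - 1) x) / h + h / 2 * g1 (discU g1 h n x)) /
    g2 (discU g1 h n x)

/-- `(u₁, …, u_n)` (encoded as `u : ℕ → ℝ` on indices `1,…,n`) is a positive solution of
the discrete system `(Sα)`. -/
def IsSolution (g1 g2 : ℝ → ℝ) (n : ℕ) (h α : ℝ) (u : ℕ → ℝ) : Prop :=
  (∀ k, 1 ≤ k → k ≤ n → 0 < u k) ∧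
  u 2 - u 1 = h ^ 2 / 2 * g1 (u 1) ∧
  (∀ k, 2 ≤ k → k ≤ n - 1 → u (k + 1) - 2 * u k + u (k - 1) = h ^ 2 * g1 (u k)) ∧
  u n - u (n - 1) = -(h ^ 2 / 2) * g1 (u n) + h * α * g2 (u n)

/-- `G₁`, the primitive of `g₁` vanishing at `0`. -/
def primG1 (g1 : ℝ → ℝ) (x : ℝ) : ℝ := ∫ t in (0:ℝ)..x, g1 t

/-- `g := g₁/g₂`. -/
def gg (g1 g2 : ℝ → ℝ) (x : ℝ) : ℝ := g1 x / g2 x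

/-- `G := G₁/g₂²`. -/
def GG (g1 g2 : ℝ → ℝ) (x : ℝ) : ℝ := primG1 g1 x / (g2 x) ^ 2

/-- The trapezoidal-rule error `E` as a function of `u₁`. -/
def trapError (g1 : ℝ → ℝ) (h : ℝ) (n : ℕ) (x : ℝ) : ℝ :=
  (∑ k ∈ Finset.Icc 1 (n - 1),
    (g1 (discU g1 h k x) + g1 (discU g1 h (k + 1) x)) / 2 *
      (discU g1 h (k + 1) x - discU g1 h k x)) -
  (primG1 g1 (discU g1 h n x) - primG1 g1 (discU g1 h 1 x))

/-- The Jacobian matrix `J(α,u)` of the system `(Sα)`. -/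
def Jmat (g1 g2 : ℝ → ℝ) (n : ℕ) (h α : ℝ) (u : ℕ → ℝ) : Matrix (Fin n) (Fin n) ℝ :=
  Matrix.of fun i j =>
    if i = j then
      (if (i : ℕ) = 0 then 1 + h ^ 2 / 2 * deriv g1 (u 1)
       else if (i : ℕ) = n - 1 then
         1 + h ^ 2 / 2 * deriv g1 (u n) - h * α * deriv g2 (u n)
       else 2 + h ^ 2 * deriv g1 (u ((i : ℕ) + 1)))
    else if (i : ℕ) + 1 = (j : ℕ) ∨ (j : ℕ) + 1 = (i : ℕ) then -1 else 0

/-! ### Auxiliary lemmas -/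

section AuxLemmas
open Set intervalIntegral

private lemma aux_deriv_smooth (f : ℝ → ℝ) (hf : ContDiff ℝ 3 f) :
    Differentiable ℝ (deriv f) := by
  have h : ContDiff ℝ ((2:WithTop ℕ∞)+1) f := by
    have : ((2:WithTop ℕ∞)+1) = 3 := by norm_num
    rw [this]; exact hf
  exact (contDiff_succ_iff_deriv.mp h).2.2.differentiable (by norm_num)

private lemma aux_sm (f : ℝ → ℝ) (hf : ContDiff ℝ 3 f)
    (hfd : ∀ x > (0:ℝ), 0 < deriv f x) : StrictMonoOn f (Ici 0) :=
  strictMonoOn_of_deriv_pos (convex_Ici 0) hf.continuous.continuousOn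
    (by simpa [interior_Ici] using hfd)

private lemma aux_pos (f : ℝ → ℝ) (hf : ContDiff ℝ 3 f) (h0 : f 0 = 0)
    (hfd : ∀ x > (0:ℝ), 0 < deriv f x) : ∀ x > (0:ℝ), 0 < f x := by
  intro x hx
  have := aux_sm f hf hfd (self_mem_Ici) (le_of_lt hx) hx
  simpa [h0] using this

private lemma aux_mono (f : ℝ → ℝ) (hf : ContDiff ℝ 3 f)
    (hfd : ∀ x > (0:ℝ), 0 < deriv f x) {x y : ℝ} (hx : 0 ≤ x) (hxy : x ≤ y) :
    f x ≤ f y :=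
  (aux_sm f hf hfd).monotoneOn hx (le_trans hx hxy) hxy

private lemma aux_dmono (f : ℝ → ℝ) (hf : ContDiff ℝ 3 f)
    (hdd : ∀ x > (0:ℝ), 0 ≤ deriv (deriv f) x) : MonotoneOn (deriv f) (Ioi 0) := by
  have hd1 := aux_deriv_smooth f hf
  exact monotoneOn_of_deriv_nonneg (convex_Ioi 0) hd1.continuous.continuousOn
    (by simpa [interior_Ioi] using hd1.differentiableOn)
    (by simpa [interior_Ioi] using hdd)

private lemma primG1_hasDeriv {g1 : ℝ → ℝ} (hg1C : Continuous g1) (x : ℝ) :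
    HasDerivAt (primG1 g1) (g1 x) x :=
  intervalIntegral.integral_hasDerivAt_right (hg1C.intervalIntegrable _ _)
    (hg1C.stronglyMeasurableAtFilter _ _) hg1C.continuousAt

private lemma primG1_sub {g1 : ℝ → ℝ} (hg1C : Continuous g1) (v w : ℝ) :
    primG1 g1 w - primG1 g1 v = ∫ t in v..w, g1 t :=
  integral_interval_sub_left (hg1C.intervalIntegrable _ _) (hg1C.intervalIntegrable _ _)

private lemma primG1_pos {g1 : ℝ → ℝ} (hg1C : ContDiff ℝ 3 g1) (hg10 : g1 0 = 0)
    (hg1d : ∀ x > (0:ℝ), 0 < deriv g1 x) : ∀ x > (0:ℝ), 0 < primG1 g1 x := by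
  intro x hx
  exact intervalIntegral.intervalIntegral_pos_of_pos_on
    (hg1C.continuous.intervalIntegrable _ _)
    (fun t ht => aux_pos g1 hg1C hg10 hg1d t ht.1) hx

private lemma aux_trapezoid {g1 : ℝ → ℝ} (hg1C : ContDiff ℝ 3 g1)
    (hg1dd : ∀ x > (0:ℝ), 0 < deriv (deriv g1) x)
    {v w : ℝ} (hv : 0 < v) (hvw : v < w) :
    ∫ t in v..w, g1 t ≤ (g1 v + g1 w) / 2 * (w - v) := by
  have hcv : ConvexOn ℝ (Ici 0) g1 := by
    refine convexOn_of_deriv2_nonneg (convex_Ici 0) hg1C.continuous.continuousOn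
      (hg1C.differentiable (by norm_num)).differentiableOn
      (by simpa [interior_Ici] using (aux_deriv_smooth g1 hg1C).differentiableOn) ?_
    intro x hx
    rw [interior_Ici] at hx
    have : deriv^[2] g1 x = deriv (deriv g1) x := by
      simp [Function.iterate_succ_apply', Function.iterate_zero_apply]
    rw [this]
    exact le_of_lt (hg1dd x hx)
  have hwv : (0:ℝ) < w - v := by linarith
  set m : ℝ := (g1 w - g1 v) / (w - v) with hm
  have key : ∀ t ∈ Icc v w, g1 t ≤ g1 v + m * (t - v) := by
    intro t ht
    rcases ht with ⟨ht1, ht2⟩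
    set b : ℝ := (t - v) / (w - v) with hb
    have hb0 : 0 ≤ b := div_nonneg (by linarith) (le_of_lt hwv)
    have hb1 : b ≤ 1 := by
      rw [hb, div_le_one hwv]; linarith
    have habs : (1 - b) • v + b • w = t := by
      field_simp [hb]
      have hbw : b * (w - v) = t - v := by rw [hb]; exact div_mul_cancel₀ _ (ne_of_gt hwv)
      linear_combination hbw
    have := hcv.2 (show v ∈ Ici (0:ℝ) from le_of_lt hv)
      (show w ∈ Ici (0:ℝ) from by simp [Ici]; linarith)
      (by linarith : (0:ℝ) ≤ 1 - b) hb0 (by ring)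
    rw [habs] at this
    have hexp : (1 - b) • g1 v + b • g1 w = g1 v + m * (t - v) := by
      simp only [smul_eq_mul]
      rw [hm, hb]
      field_simp
      ring
    rw [hexp] at this
    exact this
  have hint : (∫ t in v..w, g1 t) ≤ ∫ t in v..w, (g1 v + m * (t - v)) := by
    apply intervalIntegral.integral_mono_on (le_of_lt hvw)
      (hg1C.continuous.intervalIntegrable _ _) ?_ key
    exact (Continuous.intervalIntegrable (by continuity) _ _)
  have hval : (∫ t in v..w, (g1 v + m * (t - v))) = (g1 v + g1 w) / 2 * (w - v) := by
    have h1 : (∫ t in v..w, (g1 v + m * (t - v)))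
        = (∫ t in v..w, (g1 v - m * v)) + ∫ t in v..w, m * t := by
      rw [← intervalIntegral.integral_add]
      · congr 1; ext t; ring
      · exact intervalIntegrable_const
      · exact (Continuous.intervalIntegrable (by continuity) _ _)
    rw [h1, intervalIntegral.integral_const, intervalIntegral.integral_const_mul,
      integral_id]
    rw [hm]
    simp only [smul_eq_mul]
    field_simp
    ring
  linarith [hint, hval.le, hval.ge]


private def GGd (g1 g2 : ℝ → ℝ) (x : ℝ) : ℝ :=
  (g1 x * (g2 x) ^ 2 - primG1 g1 x * (2 * g2 x * deriv g2 x)) / ((g2 x) ^ 2) ^ 2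

private lemma GG_hasDeriv {g1 g2 : ℝ → ℝ} (hg1C : ContDiff ℝ 3 g1) (hg2C : ContDiff ℝ 3 g2)
    {x : ℝ} (hx : g2 x ≠ 0) : HasDerivAt (GG g1 g2) (GGd g1 g2 x) x := by
  have h2 : HasDerivAt (fun y => (g2 y) ^ 2) (2 * g2 x * deriv g2 x) x := by
    have hd : HasDerivAt g2 (deriv g2 x) x :=
      ((hg2C.differentiable (by norm_num)) x).hasDerivAt
    have := hd.fun_pow 2
    exact this.congr_deriv (by norm_num)
  have h1 := primG1_hasDeriv hg1C.continuous x
  exact h1.div h2 (pow_ne_zero 2 hx)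

private lemma GGd_diffAt {g1 g2 : ℝ → ℝ} (hg1C : ContDiff ℝ 3 g1) (hg2C : ContDiff ℝ 3 g2)
    {x : ℝ} (hx : g2 x ≠ 0) : DifferentiableAt ℝ (GGd g1 g2) x := by
  have hprim : DifferentiableAt ℝ (primG1 g1) x :=
    (primG1_hasDeriv hg1C.continuous x).differentiableAt
  have hg1 : DifferentiableAt ℝ g1 x := (hg1C.differentiable (by norm_num)) x
  have hg2 : DifferentiableAt ℝ g2 x := (hg2C.differentiable (by norm_num)) x
  have hdg2 : DifferentiableAt ℝ (deriv g2) x := aux_deriv_smooth g2 hg2C x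
  exact ((hg1.mul (hg2.pow 2)).sub (hprim.mul ((hg2.const_mul 2).mul hdg2))).div
    ((hg2.pow 2).pow 2) (pow_ne_zero 2 (pow_ne_zero 2 hx))

private lemma derivGG_eq {g1 g2 : ℝ → ℝ} (hg1C : ContDiff ℝ 3 g1) (hg2C : ContDiff ℝ 3 g2)
    {x : ℝ} (hx : g2 x ≠ 0) : deriv (GG g1 g2) x = GGd g1 g2 x :=
  (GG_hasDeriv hg1C hg2C hx).deriv

private lemma derivGG_mono {g1 g2 : ℝ → ℝ} (hg1C : ContDiff ℝ 3 g1) (hg2C : ContDiff ℝ 3 g2)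
    (hg2pos : ∀ x > (0:ℝ), 0 < g2 x)
    (hH3 : ∀ x > (0:ℝ), 0 ≤ deriv (deriv (GG g1 g2)) x) :
    MonotoneOn (deriv (GG g1 g2)) (Ioi 0) := by
  have hdiff : ∀ x ∈ Ioi (0:ℝ), DifferentiableAt ℝ (deriv (GG g1 g2)) x := by
    intro x hx
    have heq : deriv (GG g1 g2) =ᶠ[nhds x] GGd g1 g2 := by
      filter_upwards [IsOpen.mem_nhds isOpen_Ioi hx] with y hy
      exact derivGG_eq hg1C hg2C (ne_of_gt (hg2pos y hy))
    exact (GGd_diffAt hg1C hg2C (ne_of_gt (hg2pos x hx))).congr_of_eventuallyEq heq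
  refine monotoneOn_of_deriv_nonneg (convex_Ioi 0) ?_ ?_ ?_
  · exact fun x hx => (hdiff x hx).continuousAt.continuousWithinAt
  · rw [interior_Ioi]; exact fun x hx => (hdiff x hx).differentiableWithinAt
  · rw [interior_Ioi]; exact hH3

private lemma aux_mvt (f : ℝ → ℝ) {a b : ℝ} (h0 : 0 < a) (hab : a < b)
    (hdiff : ∀ x ∈ Ioi (0:ℝ), DifferentiableAt ℝ f x) :
    ∃ c ∈ Ioo a b, f b - f a = deriv f c * (b - a) := by
  obtain ⟨c, hc, hceq⟩ := exists_deriv_eq_slope f hab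
    (fun x hx => (hdiff x (lt_of_lt_of_le h0 hx.1)).continuousAt.continuousWithinAt)
    (fun x hx => (hdiff x (lt_trans h0 hx.1)).differentiableWithinAt)
  refine ⟨c, hc, ?_⟩
  rw [hceq]
  field_simp [ne_of_gt (sub_pos.mpr hab)]

end AuxLemmas

set_option maxHeartbeats 4000000 in
theorem stmt_11 (n : ℕ) (hn : 2 ≤ n) (h : ℝ) (hh : h = 1 / ((n : ℝ) - 1))
    (g1 g2 : ℝ → ℝ)
    (hg1C : ContDiff ℝ 3 g1) (hg2C : ContDiff ℝ 3 g2)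
    (hg10 : g1 0 = 0) (hg20 : g2 0 = 0)
    (hg1d : ∀ x > (0:ℝ), 0 < deriv g1 x) (hg2d : ∀ x > (0:ℝ), 0 < deriv g2 x)
    (hg1dd : ∀ x > (0:ℝ), 0 < deriv (deriv g1) x)
    (hg2dd : ∀ x > (0:ℝ), 0 < deriv (deriv g2) x)
    (hg1ddd : ∀ x > (0:ℝ), 0 ≤ deriv (deriv (deriv g1)) x)
    (hg2ddd : ∀ x > (0:ℝ), 0 ≤ deriv (deriv (deriv g2)) x)
    (α : ℝ) (hα : 0 < α) (u : ℕ → ℝ) (hu : IsSolution g1 g2 n h α u)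
    (hgmono : StrictMonoOn (gg g1 g2) (Set.Ioi 0))
    (hgbij : Set.BijOn (gg g1 g2) (Set.Ioi 0) (Set.Ioi 0))
    (hGmono : StrictMonoOn (GG g1 g2) (Set.Ioi 0))
    (hGbij : Set.BijOn (GG g1 g2) (Set.Ioi 0) (Set.Ioi 0))
    (ginv Ginv : ℝ → ℝ)
    (hginv : ∀ y ∈ Set.Ioi (0:ℝ), ginv y ∈ Set.Ioi 0 ∧ gg g1 g2 (ginv y) = y)
    (hGinv : ∀ y ∈ Set.Ioi (0:ℝ), Ginv y ∈ Set.Ioi 0 ∧ GG g1 g2 (Ginv y) = y)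
    (d : ℝ) (hd0 : 0 ≤ d) (hd1 : d < 1)
    (hH2 : ∀ x > (0:ℝ), 0 ≤ d * g1 x / primG1 g1 x - 2 * deriv g2 x / g2 x)
    (hH3 : ∀ x > (0:ℝ), 0 ≤ deriv (deriv (GG g1 g2)) x) :
    ∀ C1 M Chat : ℝ,
      C1 = Ginv (GG g1 g2 (ginv (α / Real.sqrt (1 - d))) + α ^ 2 / 2) →
      M = deriv g1 C1 →
      Chat = 1 + deriv g2 C1 * α ^ 2 /
          (2 * g2 (ginv α / Real.exp M) * deriv (GG g1 g2) (ginv α / Real.exp M)) →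
      u 1 < ginv (α * Chat) ∧
      u n < Ginv (GG g1 g2 (ginv (α * Chat)) + α ^ 2 / 2) := by
  intro C1 M Chat hC1 hM hChat
  obtain ⟨N, rfl⟩ : ∃ N, n = N + 2 := ⟨n - 2, by omega⟩
  obtain ⟨hupos, hD1, hint, hbnd⟩ := hu
  -- real-number facts about h
  have hhN : h * ((N:ℝ) + 1) = 1 := by
    rw [hh]; push_cast
    have : ((N:ℝ) + 2 - 1) = (N:ℝ) + 1 := by ring
    rw [this]
    field_simp
  have hhpos : 0 < h := by
    rw [hh]; push_cast
    have : ((N:ℝ) + 2 - 1) = (N:ℝ) + 1 := by ring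
    rw [this]; positivity
  -- basic positivity and monotonicity facts for g1, g2
  have hg1pos : ∀ x > (0:ℝ), 0 < g1 x := aux_pos g1 hg1C hg10 hg1d
  have hg2pos : ∀ x > (0:ℝ), 0 < g2 x := aux_pos g2 hg2C hg20 hg2d
  have hg1mono := aux_sm g1 hg1C hg1d
  have hg2mono := aux_sm g2 hg2C hg2d
  have hG1pos : ∀ x > (0:ℝ), 0 < primG1 g1 x := primG1_pos hg1C hg10 hg1d
  have hd1' : (0:ℝ) < 1 - d := by linarith
  -- the slope sums
  obtain ⟨c, hc0, hcsucc⟩ : ∃ c : ℕ → ℝ, c 0 = g1 (u 1) / 2 ∧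
      ∀ K, c (K + 1) = c K + g1 (u (K + 2)) := by
    refine ⟨fun K => g1 (u 1) / 2 + ∑ i ∈ Finset.range K, g1 (u (i + 2)), by simp, ?_⟩
    intro K; simp [Finset.sum_range_succ]; ring
  have hu1pos : 0 < u 1 := hupos 1 le_rfl (by omega)
  have hbpos : 0 < u (N + 2) := hupos (N + 2) (by omega) le_rfl
  -- L1 : slope formula
  have hD : ∀ K, K ≤ N → u (K + 2) - u (K + 1) = h ^ 2 * c K := by
    intro K
    induction K with
    | zero =>
      intro _
      rw [hc0, hD1]; ring
    | succ K ih =>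
      intro hK
      have h2 := hint (K + 2) (by omega) (by omega)
      have hidx : (K + 2) - 1 = K + 1 := rfl
      rw [hidx] at h2
      have ihh := ih (by omega)
      rw [hcsucc]
      have : u (K + 2 + 1) - u (K + 2) = (u (K + 2) - u (K + 1)) + h ^ 2 * g1 (u (K + 2)) := by
        linarith [h2]
      rw [show K + 1 + 2 = K + 2 + 1 from rfl, this, ihh]; ring
  -- positivity of c
  have hcpos : ∀ K, K ≤ N → 0 < c K := by
    intro K hK
    induction K with
    | zero => rw [hc0]; have := hg1pos (u 1) hu1pos; linarith
    | succ K ih =>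
      rw [hcsucc]
      have h1 := ih (by omega)
      have h2 := hg1pos _ (hupos (K + 2) (by omega) (by omega))
      linarith
  -- monotonicity of u
  have hstep : ∀ K, K ≤ N → u (K + 1) < u (K + 2) := by
    intro K hK
    have hDK := hD K hK
    have hcK := hcpos K hK
    have hp : 0 < h ^ 2 * c K := by positivity
    linarith
  have humono : ∀ i j, 1 ≤ i → i ≤ j → j ≤ N + 2 → u i ≤ u j := by
    intro i j hi
    induction j with
    | zero => intro h1 h2; omega
    | succ j ih =>
      intro hij hj
      rcases Nat.eq_or_lt_of_le hij with heq | hlt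
      · rw [heq]
      · have h1 : u i ≤ u j := ih (by omega) (by omega)
        obtain ⟨K, rfl⟩ : ∃ K, j = K + 1 := ⟨j - 1, by omega⟩
        exact le_trans h1 (le_of_lt (hstep K (by omega)))
  have hu1b : u 1 < u (N + 2) := by
    calc u 1 < u 2 := by have := hstep 0 (by omega); simpa using this
      _ ≤ u (N + 2) := humono 2 (N + 2) (by omega) (by omega) (by omega)
  -- L4 : the sum identity from the boundary condition
  have hkey : α * g2 (u (N + 2)) = h * (c N + g1 (u (N + 2)) / 2) := by
    have hDN := hD N le_rfl
    have hidx : (N + 2) - 1 = N + 1 := rfl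
    rw [hidx] at hbnd
    have h2 : h * α * g2 (u (N + 2)) = h ^ 2 * c N + h ^ 2 / 2 * g1 (u (N + 2)) := by
      linarith [hbnd, hDN]
    have h1 : h * (α * g2 (u (N + 2))) = h * (h * (c N + g1 (u (N + 2)) / 2)) := by
      rw [show h * (α * g2 (u (N + 2))) = h * α * g2 (u (N + 2)) from by ring, h2]; ring
    exact mul_left_cancel₀ (ne_of_gt hhpos) h1
  -- monotonicity helpers for g1, g2
  have hg1m : ∀ {x y : ℝ}, 0 ≤ x → x ≤ y → g1 x ≤ g1 y :=
    fun hx hxy => aux_mono g1 hg1C hg1d hx hxy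
  have hg2m : ∀ {x y : ℝ}, 0 ≤ x → x ≤ y → g2 x ≤ g2 y :=
    fun hx hxy => aux_mono g2 hg2C hg2d hx hxy
  have hg1u1pos := hg1pos (u 1) hu1pos
  -- lower bound for c K
  have hc_low : ∀ K, K ≤ N → ((K:ℝ) + 1/2) * g1 (u 1) ≤ c K := by
    intro K
    induction K with
    | zero => intro _; rw [hc0]; push_cast; linarith
    | succ K ih =>
      intro hK
      rw [hcsucc]
      have h1 := ih (by omega)
      have h2 : g1 (u 1) ≤ g1 (u (K + 2)) :=
        hg1m (le_of_lt hu1pos) (humono 1 (K + 2) le_rfl (by omega) (by omega))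
      push_cast at h1 ⊢
      linarith
  -- upper bound for c N
  have hcN_high : c N ≤ ((N:ℝ) + 1/2) * g1 (u (N + 2)) := by
    have key : ∀ K, K ≤ N → c K ≤ ((K:ℝ) + 1/2) * g1 (u (N + 2)) := by
      intro K
      induction K with
      | zero =>
        intro _
        rw [hc0]
        have := hg1m (le_of_lt hu1pos) (le_of_lt hu1b)
        push_cast; linarith
      | succ K ih =>
        intro hK
        rw [hcsucc]
        have h1 := ih (by omega)
        have h2 : g1 (u (K + 2)) ≤ g1 (u (N + 2)) :=
          hg1m (le_of_lt (hupos (K + 2) (by omega) (by omega)))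
            (humono (K + 2) (N + 2) (by omega) (by omega) (by omega))
        push_cast at h1 ⊢
        linarith
    exact key N le_rfl
  -- strict bound (K0) : g1 (u 1) < α g2 (b)
  have hg1b_gt : g1 (u 1) < g1 (u (N + 2)) :=
    hg1mono (le_of_lt hu1pos) (le_of_lt hbpos) hu1b
  have hK0 : g1 (u 1) < α * g2 (u (N + 2)) := by
    rw [hkey]
    have h1 : ((N:ℝ) + 1) * g1 (u 1) < c N + g1 (u (N + 2)) / 2 := by
      have := hc_low N le_rfl
      linarith
    calc g1 (u 1) = h * (((N:ℝ) + 1) * g1 (u 1)) := by rw [← mul_assoc, hhN, one_mul]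
      _ < h * (c N + g1 (u (N + 2)) / 2) := by
          exact mul_lt_mul_of_pos_left h1 hhpos
  -- bound (K1) : α g2 (b) ≤ g1 (b)
  have hK1 : α * g2 (u (N + 2)) ≤ g1 (u (N + 2)) := by
    rw [hkey]
    have h1 : c N + g1 (u (N + 2)) / 2 ≤ ((N:ℝ) + 1) * g1 (u (N + 2)) := by
      linarith [hcN_high]
    calc h * (c N + g1 (u (N + 2)) / 2) ≤ h * (((N:ℝ) + 1) * g1 (u (N + 2))) :=
          mul_le_mul_of_nonneg_left h1 (le_of_lt hhpos)
      _ = g1 (u (N + 2)) := by rw [← mul_assoc, hhN, one_mul]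
  -- the gap : b - u1 ≥ g1(u1)/2
  have hgap : g1 (u 1) / 2 ≤ u (N + 2) - u 1 := by
    have haux : ∀ K, K ≤ N + 1 → h ^ 2 * ((K:ℝ) ^ 2 / 2) * g1 (u 1) ≤ u (K + 1) - u 1 := by
      intro K
      induction K with
      | zero => intro _; norm_num
      | succ K ih =>
        intro hK
        have h1 := ih (by omega)
        have h2 := hD K (by omega)
        have h3 := hc_low K (by omega)
        have h4 : h ^ 2 * (((K:ℝ) + 1/2) * g1 (u 1)) ≤ h ^ 2 * c K :=
          mul_le_mul_of_nonneg_left h3 (by positivity)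
        push_cast at h1 ⊢
        linarith [h1, h2, h4]
    have hNfin := haux (N + 1) le_rfl
    have hN1 : h ^ 2 * (((N:ℝ) + 1) ^ 2 / 2) * g1 (u 1) = g1 (u 1) / 2 := by
      have hsq : (h * ((N:ℝ) + 1)) ^ 2 = 1 := by rw [hhN]; norm_num
      linear_combination (g1 (u 1) / 2) * hsq
    push_cast at hNfin
    linarith [hNfin, hN1.ge, hN1.le]
  -- energy identity
  have hEid : ∀ K, K ≤ N → 2 * (∑ i ∈ Finset.range (K + 1),
      ((g1 (u (i + 1)) + g1 (u (i + 2))) / 2 * (u (i + 2) - u (i + 1))))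
      = h ^ 2 * ((g1 (u 1) / 2) ^ 2 + c K ^ 2 + c K * g1 (u (K + 2))) := by
    intro K
    induction K with
    | zero =>
      intro _
      rw [Finset.sum_range_one, hc0]
      norm_num
      rw [hD1]
      ring
    | succ K ih =>
      intro hK
      rw [Finset.sum_range_succ, hcsucc]
      have h1 := ih (by omega)
      have h2 := hD (K + 1) hK
      rw [hcsucc] at h2
      have e1 : K + 1 + 1 = K + 2 := by omega
      have e2 : K + 1 + 2 = K + 3 := by omega
      have e3 : K + 2 + 1 = K + 3 := by omega
      rw [e1, e2] at h2 ⊢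
      rw [e3]
      linear_combination h1 + (g1 (u (K + 2)) + g1 (u (K + 3))) * h2
  -- the energy inequality
  have henergy : 2 * (primG1 g1 (u (N + 2)) - primG1 g1 (u 1)) ≤ (α * g2 (u (N + 2))) ^ 2 := by
    have hT := hEid N le_rfl
    have htrap : primG1 g1 (u (N + 2)) - primG1 g1 (u 1)
        ≤ ∑ i ∈ Finset.range (N + 1),
          ((g1 (u (i + 1)) + g1 (u (i + 2))) / 2 * (u (i + 2) - u (i + 1))) := by
      have htel : ∑ i ∈ Finset.range (N + 1),
          (primG1 g1 (u (i + 2)) - primG1 g1 (u (i + 1)))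
          = primG1 g1 (u (N + 2)) - primG1 g1 (u 1) := by
        have := Finset.sum_range_sub (fun i => primG1 g1 (u (i + 1))) (N + 1)
        simpa using this
      rw [← htel]
      apply Finset.sum_le_sum
      intro i hi
      have hi' := Finset.mem_range.mp hi
      have hv : 0 < u (i + 1) := hupos (i + 1) (by omega) (by omega)
      have hvw : u (i + 1) < u (i + 2) := hstep i (by omega)
      have htz := aux_trapezoid hg1C hg1dd hv hvw
      rw [primG1_sub hg1C.continuous]
      exact htz
    have hab : (α * g2 (u (N + 2))) ^ 2
        = h ^ 2 * (c N ^ 2 + c N * g1 (u (N + 2)) + g1 (u (N + 2)) ^ 2 / 4) := by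
      rw [hkey]; ring
    have hsq : g1 (u 1) ^ 2 ≤ g1 (u (N + 2)) ^ 2 :=
      pow_le_pow_left₀ (le_of_lt hg1u1pos) (le_of_lt hg1b_gt) 2
    have hkey2 : 0 ≤ h ^ 2 * (g1 (u (N + 2)) ^ 2 / 4 - g1 (u 1) ^ 2 / 4) := by
      apply mul_nonneg (sq_nonneg h)
      linarith
    linarith [hT, htrap, hab.le, hab.ge, hkey2]
  -- ===================== continuum part =====================
  have hsqrt_pos : 0 < Real.sqrt (1 - d) := Real.sqrt_pos.mpr hd1'
  have hsq1d : Real.sqrt (1 - d) ^ 2 = 1 - d := Real.sq_sqrt (le_of_lt hd1')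
  have hαs_pos : 0 < α / Real.sqrt (1 - d) := div_pos hα hsqrt_pos
  obtain ⟨hP0mem, hP0val⟩ := hginv _ (Set.mem_Ioi.mpr hαs_pos)
  have hP0pos : 0 < ginv (α / Real.sqrt (1 - d)) := Set.mem_Ioi.mp hP0mem
  have hGGpos : ∀ x > (0:ℝ), 0 < GG g1 g2 x := fun x hx =>
    Set.mem_Ioi.mp (hGbij.mapsTo (Set.mem_Ioi.mpr hx))
  have hC1arg_pos : 0 < GG g1 g2 (ginv (α / Real.sqrt (1 - d))) + α ^ 2 / 2 := by
    have := hGGpos _ hP0pos; positivity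
  obtain ⟨hC1mem, hC1val⟩ := hGinv _ (Set.mem_Ioi.mpr hC1arg_pos)
  rw [← hC1] at hC1mem hC1val
  have hC1pos : 0 < C1 := Set.mem_Ioi.mp hC1mem
  -- differentiability of GG on (0,∞)
  have hGGdiff : ∀ x ∈ Set.Ioi (0:ℝ), DifferentiableAt ℝ (GG g1 g2) x := fun x hx =>
    (GG_hasDeriv hg1C hg2C (ne_of_gt (hg2pos x hx))).differentiableAt
  -- lower bound on deriv GG
  have hGGd_lb : ∀ x, 0 < x → (1 - d) * (g1 x / g2 x ^ 2) ≤ deriv (GG g1 g2) x := by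
    intro x hx
    rw [derivGG_eq hg1C hg2C (ne_of_gt (hg2pos x hx))]
    unfold GGd
    have hG1x := hG1pos x hx
    have hg2x := hg2pos x hx
    have hH2x := hH2 x hx
    have hkey' : 2 * primG1 g1 x * deriv g2 x ≤ d * g1 x * g2 x := by
      have h1 : 2 * deriv g2 x / g2 x ≤ d * g1 x / primG1 g1 x := by linarith
      rw [div_le_div_iff₀ hg2x hG1x] at h1
      linarith [h1]
    have e : (1 - d) * (g1 x / g2 x ^ 2) = ((1 - d) * g1 x) / g2 x ^ 2 := by ring
    rw [e, div_le_div_iff₀ (by positivity) (by positivity)]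
    have hkey3 : (2 * primG1 g1 x * deriv g2 x) * g2 x ^ 3 ≤ (d * g1 x * g2 x) * g2 x ^ 3 :=
      mul_le_mul_of_nonneg_right hkey' (by positivity)
    linarith [hkey3]
  have hGGd_pos : ∀ x, 0 < x → 0 < deriv (GG g1 g2) x := by
    intro x hx
    have h1 := hGGd_lb x hx
    have h2 : 0 < (1 - d) * (g1 x / g2 x ^ 2) := by
      have := hg1pos x hx; have := hg2pos x hx; positivity
    linarith
  have hGGmono := derivGG_mono hg1C hg2C hg2pos hH3
  have hdg2mono := aux_dmono g2 hg2C (fun x hx => le_of_lt (hg2dd x hx))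
  have hdg1mono := aux_dmono g1 hg1C (fun x hx => le_of_lt (hg1dd x hx))
  -- α² ≥ 2 (GG b − GG u1)
  have hGGb_le : 2 * (GG g1 g2 (u (N + 2)) - GG g1 g2 (u 1)) ≤ α ^ 2 := by
    have hg2b := hg2pos _ hbpos
    have hg2u1 := hg2pos _ hu1pos
    have hG1u1 := hG1pos _ hu1pos
    have hle : g2 (u 1) ≤ g2 (u (N + 2)) := hg2m (le_of_lt hu1pos) (le_of_lt hu1b)
    have h1 : primG1 g1 (u 1) / g2 (u (N + 2)) ^ 2 ≤ GG g1 g2 (u 1) := by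
      unfold GG
      have hsq2 : g2 (u 1) ^ 2 ≤ g2 (u (N + 2)) ^ 2 :=
        pow_le_pow_left₀ (le_of_lt hg2u1) hle 2
      exact div_le_div_of_nonneg_left (le_of_lt hG1u1) (pow_pos hg2u1 2) hsq2
    have h4 : 2 * (GG g1 g2 (u (N + 2)) - primG1 g1 (u 1) / g2 (u (N + 2)) ^ 2) ≤ α ^ 2 := by
      have hpos2 : (0:ℝ) < g2 (u (N + 2)) ^ 2 := by positivity
      have e : 2 * (GG g1 g2 (u (N + 2)) - primG1 g1 (u 1) / g2 (u (N + 2)) ^ 2)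
          = 2 * (primG1 g1 (u (N + 2)) - primG1 g1 (u 1)) / g2 (u (N + 2)) ^ 2 := by
        unfold GG; field_simp
      rw [e, div_le_iff₀ hpos2]
      calc 2 * (primG1 g1 (u (N + 2)) - primG1 g1 (u 1)) ≤ (α * g2 (u (N + 2))) ^ 2 := henergy
        _ = α ^ 2 * g2 (u (N + 2)) ^ 2 := by ring
    linarith [h1, h4]
  have hGGu1b : GG g1 g2 (u (N + 2)) ≤ GG g1 g2 (u 1) + α ^ 2 / 2 := by linarith [hGGb_le]
  -- crude bound : √(1−d) g(u1) ≤ α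
  have hggu1_bound : gg g1 g2 (u 1) * Real.sqrt (1 - d) ≤ α := by
    obtain ⟨ζ, hζ, hζeq⟩ := aux_mvt (GG g1 g2) hu1pos hu1b hGGdiff
    have hζpos : 0 < ζ := lt_trans hu1pos hζ.1
    have hmono := hGGmono (Set.mem_Ioi.mpr hu1pos) (Set.mem_Ioi.mpr hζpos) (le_of_lt hζ.1)
    have hlb := hGGd_lb (u 1) hu1pos
    have h5 : (1 - d) * (g1 (u 1) / g2 (u 1) ^ 2) * (g1 (u 1) / 2)
        ≤ GG g1 g2 (u (N + 2)) - GG g1 g2 (u 1) := by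
      rw [hζeq]
      have t1 : (1 - d) * (g1 (u 1) / g2 (u 1) ^ 2) ≤ deriv (GG g1 g2) ζ := le_trans hlb hmono
      calc (1 - d) * (g1 (u 1) / g2 (u 1) ^ 2) * (g1 (u 1) / 2)
          ≤ deriv (GG g1 g2) ζ * (g1 (u 1) / 2) := by
            apply mul_le_mul_of_nonneg_right t1
            positivity
        _ ≤ deriv (GG g1 g2) ζ * (u (N + 2) - u 1) :=
            mul_le_mul_of_nonneg_left hgap (le_of_lt (hGGd_pos ζ hζpos))
    have h6 : (1 - d) * (gg g1 g2 (u 1)) ^ 2 ≤ α ^ 2 := by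
      have hg2u1 := hg2pos _ hu1pos
      have e : (1 - d) * (gg g1 g2 (u 1)) ^ 2
          = 2 * ((1 - d) * (g1 (u 1) / g2 (u 1) ^ 2) * (g1 (u 1) / 2)) := by
        unfold gg; field_simp
      rw [e]; linarith [h5, hGGb_le]
    have hggpos : 0 < gg g1 g2 (u 1) := by
      unfold gg; exact div_pos hg1u1pos (hg2pos _ hu1pos)
    apply le_of_pow_le_pow_left₀ two_ne_zero (le_of_lt hα)
    rw [mul_pow, hsq1d]
    linarith [h6]
  -- u1 ≤ P0 and b ≤ C1
  have hu1P0 : u 1 ≤ ginv (α / Real.sqrt (1 - d)) := by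
    by_contra hcon
    push_neg at hcon
    have hlt := hgmono (Set.mem_Ioi.mpr hP0pos) (Set.mem_Ioi.mpr hu1pos) hcon
    rw [hP0val] at hlt
    have hle2 : gg g1 g2 (u 1) ≤ α / Real.sqrt (1 - d) := by
      rw [le_div_iff₀ hsqrt_pos]; exact hggu1_bound
    linarith
  have hbC1 : u (N + 2) ≤ C1 := by
    by_contra hcon
    push_neg at hcon
    have hlt := hGmono (Set.mem_Ioi.mpr hC1pos) (Set.mem_Ioi.mpr hbpos) hcon
    rw [hC1val] at hlt
    have hle2 : GG g1 g2 (u 1) ≤ GG g1 g2 (ginv (α / Real.sqrt (1 - d))) :=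
      hGmono.monotoneOn (Set.mem_Ioi.mpr hu1pos) (Set.mem_Ioi.mpr hP0pos) hu1P0
    linarith [hGGu1b]
  -- Gronwall bound : b ≤ u1 exp M
  have hMpos : 0 < M := by rw [hM]; exact hg1d C1 hC1pos
  have hg1lin : ∀ x, 0 < x → x ≤ C1 → g1 x ≤ M * x := by
    intro x hx hxC
    obtain ⟨ξ, hξ, hξeq⟩ := exists_deriv_eq_slope g1 hx
      (hg1C.continuous.continuousOn)
      ((hg1C.differentiable (by norm_num)).differentiableOn)
    have hξpos : 0 < ξ := hξ.1
    have hmle2 : deriv g1 ξ ≤ M := by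
      rw [hM]
      exact hdg1mono (Set.mem_Ioi.mpr hξpos) (Set.mem_Ioi.mpr hC1pos)
        (le_trans (le_of_lt hξ.2) hxC)
    rw [hg10, sub_zero, sub_zero] at hξeq
    have hval : g1 x = deriv g1 ξ * x := by
      rw [hξeq]; field_simp
    rw [hval]
    exact mul_le_mul_of_nonneg_right hmle2 (le_of_lt hx)
  have hub : ∀ k, 1 ≤ k → k ≤ N + 2 → u k ≤ C1 := fun k h1 h2 =>
    le_trans (humono k (N + 2) h1 h2 le_rfl) hbC1
  have hcM : ∀ K, K ≤ N → c K ≤ M * ((K:ℝ) + 1) * u (K + 1) := by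
    intro K
    induction K with
    | zero =>
      intro _
      rw [hc0]
      have := hg1lin (u 1) hu1pos (hub 1 le_rfl (by omega))
      push_cast
      linarith [this, hg1u1pos]
    | succ K ih =>
      intro hK
      rw [hcsucc, show K + 1 + 1 = K + 2 from by omega]
      have h1 := ih (by omega)
      have hK2pos := hupos (K + 2) (by omega) (by omega)
      have h2 : g1 (u (K + 2)) ≤ M * u (K + 2) :=
        hg1lin _ hK2pos (hub (K + 2) (by omega) (by omega))
      have h3 : u (K + 1) ≤ u (K + 2) := le_of_lt (hstep K (by omega))
      have h4 : M * ((K:ℝ) + 1) * u (K + 1) ≤ M * ((K:ℝ) + 1) * u (K + 2) := by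
        apply mul_le_mul_of_nonneg_left h3
        positivity
      push_cast at h1 ⊢
      linarith [h1, h2, h4]
  have hgron : ∀ K, K ≤ N + 1 → u (K + 1) ≤ u 1 * (1 + h * M) ^ K := by
    intro K
    induction K with
    | zero => intro _; simp
    | succ K ih =>
      intro hK
      have h1 := ih (by omega)
      have h2 := hD K (by omega)
      have h3 := hcM K (by omega)
      have hKh : h * ((K:ℝ) + 1) ≤ 1 := by
        have hcast : ((K:ℝ) + 1) ≤ (N:ℝ) + 1 := by
          have : (K:ℝ) ≤ (N:ℝ) := by exact_mod_cast (by omega : K ≤ N)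
          linarith
        have := mul_le_mul_of_nonneg_left hcast (le_of_lt hhpos)
        linarith [this, hhN]
      have hu1K := hupos (K + 1) (by omega) (by omega)
      have h5 : u (K + 2) ≤ u (K + 1) * (1 + h * M) := by
        have h6 : h ^ 2 * c K ≤ h ^ 2 * (M * ((K:ℝ) + 1) * u (K + 1)) :=
          mul_le_mul_of_nonneg_left h3 (by positivity)
        have h7 : h ^ 2 * (M * ((K:ℝ) + 1) * u (K + 1)) ≤ h * M * u (K + 1) := by
          have e : h ^ 2 * (M * ((K:ℝ) + 1) * u (K + 1))
              = (h * ((K:ℝ) + 1)) * (h * M * u (K + 1)) := by ring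
          rw [e]
          have hhMu : 0 ≤ h * M * u (K + 1) := by positivity
          have hfin := mul_le_mul_of_nonneg_right hKh hhMu
          linarith [hfin]
        linarith [h2, h6, h7]
      calc u (K + 1 + 1) = u (K + 2) := by rw [show K + 1 + 1 = K + 2 from by omega]
        _ ≤ u (K + 1) * (1 + h * M) := h5
        _ ≤ (u 1 * (1 + h * M) ^ K) * (1 + h * M) := by
            apply mul_le_mul_of_nonneg_right h1
            have := mul_pos hhpos hMpos
            linarith
        _ = u 1 * (1 + h * M) ^ (K + 1) := by ring
  have hbexp : u (N + 2) ≤ u 1 * Real.exp M := by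
    have h1 := hgron (N + 1) le_rfl
    rw [show N + 1 + 1 = N + 2 from by omega] at h1
    have h2 : (1 + h * M) ^ (N + 1) ≤ Real.exp M := by
      have h3 : (1 + h * M) ≤ Real.exp (h * M) := by
        have := Real.add_one_le_exp (h * M); linarith
      have h4 : (0:ℝ) ≤ 1 + h * M := by
        have := mul_pos hhpos hMpos
        linarith
      calc (1 + h * M) ^ (N + 1) ≤ Real.exp (h * M) ^ (N + 1) :=
            pow_le_pow_left₀ h4 h3 (N + 1)
        _ = Real.exp (((N:ℝ) + 1) * (h * M)) := by
            rw [← Real.exp_nat_mul]; push_cast; ring_nf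
        _ = Real.exp M := by
            congr 1
            linear_combination M * hhN
    calc u (N + 2) ≤ u 1 * (1 + h * M) ^ (N + 1) := h1
      _ ≤ u 1 * Real.exp M := mul_le_mul_of_nonneg_left h2 (le_of_lt hu1pos)
  -- ginv α ≤ b and the lower bound m ≤ u1
  have hPb : ginv α ≤ u (N + 2) := by
    obtain ⟨hPmem, hPval⟩ := hginv α (Set.mem_Ioi.mpr hα)
    by_contra hcon
    push_neg at hcon
    have hlt := hgmono (Set.mem_Ioi.mpr hbpos) hPmem hcon
    rw [hPval] at hlt
    have hge : α ≤ gg g1 g2 (u (N + 2)) := by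
      unfold gg
      rw [le_div_iff₀ (hg2pos _ hbpos)]
      linarith [hK1]
    linarith
  have hmle : ginv α / Real.exp M ≤ u 1 := by
    rw [div_le_iff₀ (Real.exp_pos M)]
    calc ginv α ≤ u (N + 2) := hPb
      _ ≤ u 1 * Real.exp M := hbexp
  have hm_pos : 0 < ginv α / Real.exp M := by
    obtain ⟨hPmem, _⟩ := hginv α (Set.mem_Ioi.mpr hα)
    exact div_pos (Set.mem_Ioi.mp hPmem) (Real.exp_pos M)
  -- b − u1 ≤ α²/(2 deriv GG m)
  have hdGGm_pos : 0 < deriv (GG g1 g2) (ginv α / Real.exp M) := hGGd_pos _ hm_pos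
  have hgapup : deriv (GG g1 g2) (ginv α / Real.exp M) * (u (N + 2) - u 1) ≤ α ^ 2 / 2 := by
    obtain ⟨ζ, hζ, hζeq⟩ := aux_mvt (GG g1 g2) hu1pos hu1b hGGdiff
    have hζpos : 0 < ζ := lt_trans hu1pos hζ.1
    have hmono2 := hGGmono (Set.mem_Ioi.mpr hm_pos) (Set.mem_Ioi.mpr hζpos)
      (le_trans hmle (le_of_lt hζ.1))
    have hbu1 : 0 ≤ u (N + 2) - u 1 := by linarith [hu1b]
    have hmul := mul_le_mul_of_nonneg_right hmono2 hbu1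
    rw [← hζeq] at hmul
    linarith [hGGb_le, hmul]
  -- g2 b − g2 u1 ≤ deriv g2 C1 (b − u1)
  have hdg2C1_nonneg : 0 ≤ deriv g2 C1 := le_of_lt (hg2d C1 hC1pos)
  have hg2diff : g2 (u (N + 2)) - g2 (u 1) ≤ deriv g2 C1 * (u (N + 2) - u 1) := by
    obtain ⟨ξ, hξ, hξeq⟩ := aux_mvt g2 hu1pos hu1b
      (fun x _ => (hg2C.differentiable (by norm_num)) x)
    have hξpos : 0 < ξ := lt_trans hu1pos hξ.1
    have hmono3 := hdg2mono (Set.mem_Ioi.mpr hξpos) (Set.mem_Ioi.mpr hC1pos)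
      (le_trans (le_of_lt hξ.2) hbC1)
    rw [hξeq]
    exact mul_le_mul_of_nonneg_right hmono3 (by linarith [hu1b])
  -- ratio bound g2 b / g2 u1 ≤ Chat
  have hg2m_pos : 0 < g2 (ginv α / Real.exp M) := hg2pos _ hm_pos
  have hg2u1_pos := hg2pos _ hu1pos
  have hg2mm : g2 (ginv α / Real.exp M) ≤ g2 (u 1) := hg2m (le_of_lt hm_pos) hmle
  have hChat1 : g2 (u (N + 2)) / g2 (u 1) ≤ Chat := by
    rw [hChat]
    have t1 : (g2 (u (N + 2)) - g2 (u 1)) / g2 (u 1)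
        ≤ (deriv g2 C1 * (u (N + 2) - u 1)) / g2 (ginv α / Real.exp M) :=
      div_le_div₀ (mul_nonneg hdg2C1_nonneg (by linarith [hu1b])) hg2diff hg2m_pos hg2mm
    have t2 : (deriv g2 C1 * (u (N + 2) - u 1)) / g2 (ginv α / Real.exp M)
        ≤ deriv g2 C1 * α ^ 2 /
          (2 * g2 (ginv α / Real.exp M) * deriv (GG g1 g2) (ginv α / Real.exp M)) := by
      rw [div_le_div_iff₀ hg2m_pos (by positivity)]
      have hhint := mul_le_mul_of_nonneg_left hgapup
        (mul_nonneg (mul_nonneg (by norm_num : (0:ℝ) ≤ 2) hdg2C1_nonneg)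
          (le_of_lt hg2m_pos))
      linarith [hhint]
    have e1 : g2 (u (N + 2)) / g2 (u 1) = 1 + (g2 (u (N + 2)) - g2 (u 1)) / g2 (u 1) := by
      field_simp
      ring
    rw [e1]
    linarith [t1, t2]
  -- final strict bound gg u1 < α Chat
  have hggfin : gg g1 g2 (u 1) < α * Chat := by
    have s1 : gg g1 g2 (u 1) < α * (g2 (u (N + 2)) / g2 (u 1)) := by
      unfold gg
      rw [show α * (g2 (u (N + 2)) / g2 (u 1)) = (α * g2 (u (N + 2))) / g2 (u 1) from by ring]
      exact (div_lt_div_iff_of_pos_right hg2u1_pos).mpr hK0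
    have s2 : α * (g2 (u (N + 2)) / g2 (u 1)) ≤ α * Chat :=
      mul_le_mul_of_nonneg_left hChat1 (le_of_lt hα)
    linarith
  have hChat_pos : 0 < Chat := by
    rw [hChat]
    have hnn : 0 ≤ deriv g2 C1 * α ^ 2 /
        (2 * g2 (ginv α / Real.exp M) * deriv (GG g1 g2) (ginv α / Real.exp M)) := by
      apply div_nonneg (mul_nonneg hdg2C1_nonneg (sq_nonneg α))
      positivity
    linarith
  have hαChat_pos : 0 < α * Chat := mul_pos hα hChat_pos
  obtain ⟨hYmem, hYval⟩ := hginv (α * Chat) (Set.mem_Ioi.mpr hαChat_pos)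
  have hYpos : 0 < ginv (α * Chat) := Set.mem_Ioi.mp hYmem
  have goal1 : u 1 < ginv (α * Chat) := by
    by_contra hcon
    push_neg at hcon
    have hle3 := hgmono.monotoneOn (Set.mem_Ioi.mpr hYpos) (Set.mem_Ioi.mpr hu1pos) hcon
    rw [hYval] at hle3
    linarith [hggfin]
  refine ⟨goal1, ?_⟩
  have hX_pos : 0 < GG g1 g2 (ginv (α * Chat)) + α ^ 2 / 2 := by
    have := hGGpos _ hYpos; positivity
  obtain ⟨hZmem, hZval⟩ := hGinv _ (Set.mem_Ioi.mpr hX_pos)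
  have hZpos : 0 < Ginv (GG g1 g2 (ginv (α * Chat)) + α ^ 2 / 2) := Set.mem_Ioi.mp hZmem
  have hGGlt : GG g1 g2 (u 1) < GG g1 g2 (ginv (α * Chat)) :=
    hGmono (Set.mem_Ioi.mpr hu1pos) (Set.mem_Ioi.mpr hYpos) goal1
  by_contra hcon
  push_neg at hcon
  have hle4 := hGmono.monotoneOn (Set.mem_Ioi.mpr hZpos) (Set.mem_Ioi.mpr hbpos) hcon
  rw [hZval] at hle4
  linarith [hGGu1b, hGGlt]
end
end

section
/- Fix α > 0 and an integer n ≥ 2. If the function g := g₁/g₂ is a surjection of (0,∞) onto (0,∞), then the discrete system (Sα) has a positive solution; equivalently, there exists u₁ > 0 with A(u₁) = α. -/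
noncomputable section

lemma useq_continuous {g1 : ℝ → ℝ} {h : ℝ} (hc : Continuous g1) :
    ∀ k, Continuous (Useq g1 h k)
  | 0 => by simpa [Useq] using continuous_id'
  | 1 => by simp only [Useq]; fun_prop
  | (k+2) => by
      have h1 := useq_continuous (h := h) hc k
      have h2 := useq_continuous (h := h) hc (k+1)
      simp only [Useq]; fun_prop

lemma useq_zero {g1 : ℝ → ℝ} {h : ℝ} (hg10 : g1 0 = 0) :
    ∀ k, Useq g1 h k 0 = 0
  | 0 => by simp [Useq]
  | 1 => by simp [Useq, hg10]
  | (k+2) => by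
      simp only [Useq, useq_zero hg10 k, useq_zero hg10 (k+1), hg10]
      ring

lemma useq_step {g1 : ℝ → ℝ} {h : ℝ} (hgpos : ∀ x > (0:ℝ), 0 < g1 x) {x : ℝ} (hx : 0 < x) :
    ∀ k, 0 < Useq g1 h k x ∧ Useq g1 h k x ≤ Useq g1 h (k+1) x := by
  intro k
  induction k with
  | zero =>
      refine ⟨by simpa [Useq] using hx, ?_⟩
      have hg := hgpos x hx
      simp only [Useq]
      nlinarith [sq_nonneg h]
  | succ k ih =>
      have hpos : 0 < Useq g1 h (k+1) x := lt_of_lt_of_le ih.1 ih.2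
      refine ⟨hpos, ?_⟩
      have hg := hgpos _ hpos
      show Useq g1 h (k+1) x ≤ Useq g1 h (k+2) x
      simp only [Useq]
      nlinarith [sq_nonneg h, ih.2]

lemma useq_pos {g1 : ℝ → ℝ} {h : ℝ} (hgpos : ∀ x > (0:ℝ), 0 < g1 x) {x : ℝ} (hx : 0 < x)
    (k : ℕ) : 0 < Useq g1 h k x := (useq_step hgpos hx k).1

lemma useq_mono {g1 : ℝ → ℝ} {h : ℝ} (hgpos : ∀ x > (0:ℝ), 0 < g1 x) {x : ℝ} (hx : 0 < x) :
    Monotone fun k => Useq g1 h k x :=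
  monotone_nat_of_le_succ fun k => (useq_step hgpos hx k).2

lemma strictMonoOn_of_hyp {g : ℝ → ℝ} (hc : ContDiff ℝ 3 g)
    (hd : ∀ x > (0:ℝ), 0 < deriv g x) : StrictMonoOn g (Set.Ici 0) :=
  strictMonoOn_of_deriv_pos (convex_Ici 0) hc.continuous.continuousOn
    (by intro x hx; rw [interior_Ici] at hx; exact hd x hx)

lemma pos_of_hyp {g : ℝ → ℝ} (hc : ContDiff ℝ 3 g) (h0 : g 0 = 0)
    (hd : ∀ x > (0:ℝ), 0 < deriv g x) : ∀ x > (0:ℝ), 0 < g x := by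
  intro x hx
  have := strictMonoOn_of_hyp hc hd (Set.mem_Ici.2 le_rfl) (Set.mem_Ici.2 hx.le) hx
  rwa [h0] at this

lemma useq_diff_le {g1 : ℝ → ℝ} {h : ℝ} (hmono : MonotoneOn g1 (Set.Ici 0))
    (hgpos : ∀ x > (0:ℝ), 0 < g1 x) {x : ℝ} (hx : 0 < x) :
    ∀ k : ℕ, Useq g1 h (k+1) x - Useq g1 h k x ≤ h^2 * ((k:ℝ) + 1/2) * g1 (Useq g1 h (k+1) x) := by
  intro k
  induction k with
  | zero =>
      have h1 : x ≤ Useq g1 h 1 x := (useq_step hgpos hx 0).2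
      have hm : g1 x ≤ g1 (Useq g1 h 1 x) :=
        hmono (Set.mem_Ici.2 hx.le) (Set.mem_Ici.2 (hx.le.trans h1)) h1
      simp only [Useq, Nat.cast_zero] at hm ⊢
      nlinarith [sq_nonneg h]
  | succ k ih =>
      have hp1 : 0 < Useq g1 h (k+1) x := useq_pos hgpos hx (k+1)
      have hp2 : 0 < Useq g1 h (k+2) x := useq_pos hgpos hx (k+2)
      have hle : Useq g1 h (k+1) x ≤ Useq g1 h (k+2) x := (useq_step hgpos hx (k+1)).2
      have hm : g1 (Useq g1 h (k+1) x) ≤ g1 (Useq g1 h (k+2) x) :=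
        hmono (Set.mem_Ici.2 hp1.le) (Set.mem_Ici.2 hp2.le) hle
      have e : Useq g1 h (k+2) x - Useq g1 h (k+1) x
          = (Useq g1 h (k+1) x - Useq g1 h k x) + h^2 * g1 (Useq g1 h (k+1) x) := by
        simp only [Useq]; ring
      have c0 : (0:ℝ) ≤ h^2 * ((k:ℝ) + 1/2) := by positivity
      have c1 : h^2 * ((k:ℝ) + 1/2) * g1 (Useq g1 h (k+1) x)
          ≤ h^2 * ((k:ℝ) + 1/2) * g1 (Useq g1 h (k+2) x) :=
        mul_le_mul_of_nonneg_left hm c0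
      have c2 : h^2 * g1 (Useq g1 h (k+1) x) ≤ h^2 * g1 (Useq g1 h (k+2) x) :=
        mul_le_mul_of_nonneg_left hm (sq_nonneg h)
      have goal2 : Useq g1 h (k+2) x - Useq g1 h (k+1) x
          ≤ h^2 * (((k:ℝ)+1) + 1/2) * g1 (Useq g1 h (k+2) x) := by
        rw [e]; nlinarith
      push_cast
      convert goal2 using 2

lemma useq_hits {g1 : ℝ → ℝ} {h : ℝ} (hc : Continuous g1) (hg10 : g1 0 = 0)
    (hgpos : ∀ x > (0:ℝ), 0 < g1 x) (k : ℕ) {v : ℝ} (hv : 0 < v) :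
    ∃ x, 0 < x ∧ Useq g1 h k x = v := by
  have h0 : Useq g1 h k 0 = 0 := useq_zero hg10 k
  have hv' : v ≤ Useq g1 h k v := by
    have := useq_mono (h := h) hgpos hv (Nat.zero_le k)
    simpa [Useq] using this
  have hmem : v ∈ Set.Icc (Useq g1 h k 0) (Useq g1 h k v) := by
    rw [h0]; exact ⟨hv.le, hv'⟩
  obtain ⟨x, hx, hxv⟩ := intermediate_value_Icc hv.le (useq_continuous hc k).continuousOn hmem
  refine ⟨x, ?_, hxv⟩
  rcases eq_or_lt_of_le hx.1 with h' | h'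
  · exfalso; rw [← h', h0] at hxv; exact hv.ne hxv
  · exact h'

lemma discA_eq {g1 g2 : ℝ → ℝ} {h : ℝ} (m : ℕ) (x : ℝ) :
    discA g1 g2 h (m+2) x =
    ((Useq g1 h (m+1) x - Useq g1 h m x) / h + h / 2 * g1 (Useq g1 h (m+1) x)) /
      g2 (Useq g1 h (m+1) x) := by
  have e1 : m + 2 - 1 = m + 1 := by omega
  have e2 : m + 1 - 1 = m := by omega
  simp [discA, discU, e1, e2]

lemma discA_bounds {g1 g2 : ℝ → ℝ} {h : ℝ} (hh : 0 < h) {m : ℕ}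
    (hm : h * ((m:ℝ) + 1) = 1)
    (hmono : MonotoneOn g1 (Set.Ici 0))
    (hg1pos : ∀ x > (0:ℝ), 0 < g1 x) (hg2pos : ∀ x > (0:ℝ), 0 < g2 x)
    {x : ℝ} (hx : 0 < x) :
    h/2 * gg g1 g2 (Useq g1 h (m+1) x) ≤ discA g1 g2 h (m+2) x ∧
    discA g1 g2 h (m+2) x ≤ gg g1 g2 (Useq g1 h (m+1) x) := by
  set V := Useq g1 h (m+1) x with hV
  have hVpos : 0 < V := useq_pos hg1pos hx (m+1)
  have hg1V : 0 < g1 V := hg1pos V hVpos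
  have hg2V : 0 < g2 V := hg2pos V hVpos
  have hd0 : 0 ≤ Useq g1 h (m+1) x - Useq g1 h m x := by
    have := (useq_step (h := h) hg1pos hx m).2; linarith
  have hdle := useq_diff_le (h := h) hmono hg1pos hx m
  have hNlow : h/2 * g1 V ≤ (Useq g1 h (m+1) x - Useq g1 h m x) / h + h / 2 * g1 V := by
    have : 0 ≤ (Useq g1 h (m+1) x - Useq g1 h m x) / h := div_nonneg hd0 hh.le
    linarith
  have hNhigh : (Useq g1 h (m+1) x - Useq g1 h m x) / h + h / 2 * g1 V ≤ g1 V := by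
    have h1 : (Useq g1 h (m+1) x - Useq g1 h m x) / h ≤ h * ((m:ℝ) + 1/2) * g1 V := by
      rw [div_le_iff₀ hh]
      calc Useq g1 h (m+1) x - Useq g1 h m x ≤ h^2 * ((m:ℝ) + 1/2) * g1 V := hdle
        _ = h * ((m:ℝ) + 1/2) * g1 V * h := by ring
    have h2 : h * ((m:ℝ) + 1/2) * g1 V + h/2 * g1 V = (h * ((m:ℝ)+1)) * g1 V := by ring
    rw [hm] at h2
    linarith
  rw [discA_eq, gg, ← hV]
  constructor
  · have e : h/2 * (g1 V / g2 V) = (h/2 * g1 V) / g2 V := by ring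
    rw [e]
    exact div_le_div_of_nonneg_right hNlow hg2V.le
  · exact div_le_div_of_nonneg_right hNhigh hg2V.le

lemma discA_contAt {g1 g2 : ℝ → ℝ} {h : ℝ} (hc1 : Continuous g1) (hc2 : Continuous g2)
    {n : ℕ} {x : ℝ} (hne : g2 (Useq g1 h (n-1) x) ≠ 0) :
    ContinuousAt (discA g1 g2 h n) x := by
  have hU1 := useq_continuous (h := h) hc1 (n-1)
  have hU2 := useq_continuous (h := h) hc1 (n-1-1)
  unfold discA discU
  exact ContinuousAt.div (by fun_prop) (by fun_prop) hne

theorem stmt_12 (n : ℕ) (hn : 2 ≤ n) (h : ℝ) (hh : h = 1 / ((n : ℝ) - 1))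
    (g1 g2 : ℝ → ℝ)
    (hg1C : ContDiff ℝ 3 g1) (hg2C : ContDiff ℝ 3 g2)
    (hg10 : g1 0 = 0) (hg20 : g2 0 = 0)
    (hg1d : ∀ x > (0:ℝ), 0 < deriv g1 x) (hg2d : ∀ x > (0:ℝ), 0 < deriv g2 x)
    (hg1dd : ∀ x > (0:ℝ), 0 < deriv (deriv g1) x)
    (hg2dd : ∀ x > (0:ℝ), 0 < deriv (deriv g2) x)
    (hg1ddd : ∀ x > (0:ℝ), 0 ≤ deriv (deriv (deriv g1)) x)
    (hg2ddd : ∀ x > (0:ℝ), 0 ≤ deriv (deriv (deriv g2)) x)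
    (α : ℝ) (hα : 0 < α)
    (hgsurj : Set.SurjOn (gg g1 g2) (Set.Ioi 0) (Set.Ioi 0)) :
    (∃ u : ℕ → ℝ, IsSolution g1 g2 n h α u) ∧
    ∃ u1 > (0:ℝ), discA g1 g2 h n u1 = α := by
  obtain ⟨m, rfl⟩ : ∃ m, n = m + 2 := ⟨n - 2, by omega⟩
  have hcast : ((m + 2 : ℕ) : ℝ) - 1 = (m:ℝ) + 1 := by push_cast; ring
  have hm1pos : (0:ℝ) < (m:ℝ) + 1 := by positivity
  have hh0 : 0 < h := by rw [hh, hcast]; positivity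
  have hm : h * ((m:ℝ) + 1) = 1 := by rw [hh, hcast]; field_simp
  have hg1pos := pos_of_hyp hg1C hg10 hg1d
  have hg2pos := pos_of_hyp hg2C hg20 hg2d
  have hmono : MonotoneOn g1 (Set.Ici 0) := (strictMonoOn_of_hyp hg1C hg1d).monotoneOn
  obtain ⟨v, hv, hgv⟩ := hgsurj (show α/2 ∈ Set.Ioi (0:ℝ) by simp; positivity)
  obtain ⟨w, hw, hgw⟩ := hgsurj (show 3*α/h ∈ Set.Ioi (0:ℝ) by simp; positivity)
  rw [Set.mem_Ioi] at hv hw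
  obtain ⟨a, ha, hav⟩ := useq_hits (h := h) hg1C.continuous hg10 hg1pos (m+1) hv
  obtain ⟨b, hb, hbw⟩ := useq_hits (h := h) hg1C.continuous hg10 hg1pos (m+1) hw
  have hAa : discA g1 g2 h (m+2) a ≤ α := by
    have := (discA_bounds hh0 hm hmono hg1pos hg2pos ha).2
    rw [hav, hgv] at this; linarith
  have hAb : α ≤ discA g1 g2 h (m+2) b := by
    have := (discA_bounds hh0 hm hmono hg1pos hg2pos hb).1
    rw [hbw, hgw] at this
    have e : h/2 * (3*α/h) = 3*α/2 := by field_simp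
    rw [e] at this; linarith
  have hsub : Set.uIcc a b ⊆ Set.Ioi 0 := by
    intro y hy
    exact lt_of_lt_of_le (lt_min ha hb) hy.1
  have hcont : ContinuousOn (discA g1 g2 h (m+2)) (Set.uIcc a b) := by
    intro y hy
    have hy0 : 0 < y := hsub hy
    have hne : g2 (Useq g1 h (m+2-1) y) ≠ 0 := (hg2pos _ (useq_pos hg1pos hy0 _)).ne'
    exact (discA_contAt hg1C.continuous hg2C.continuous hne).continuousWithinAt
  have hαmem : α ∈ Set.uIcc (discA g1 g2 h (m+2) a) (discA g1 g2 h (m+2) b) :=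
    Set.mem_uIcc.2 (Or.inl ⟨hAa, hAb⟩)
  obtain ⟨u1, hu1mem, hu1⟩ := intermediate_value_uIcc hcont hαmem
  have hu1pos : 0 < u1 := hsub hu1mem
  refine ⟨⟨fun k => Useq g1 h (k-1) u1, ?_, ?_, ?_, ?_⟩, u1, hu1pos, hu1⟩
  · intro k _ _; exact useq_pos hg1pos hu1pos _
  · show Useq g1 h (2-1) u1 - Useq g1 h (1-1) u1 = h^2/2 * g1 (Useq g1 h (1-1) u1)
    norm_num [Useq]
  · intro k hk2 _
    obtain ⟨j, rfl⟩ := Nat.exists_eq_add_of_le hk2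
    show Useq g1 h (2+j+1-1) u1 - 2 * Useq g1 h (2+j-1) u1 + Useq g1 h (2+j-1-1) u1
        = h^2 * g1 (Useq g1 h (2+j-1) u1)
    have e1 : 2 + j + 1 - 1 = j + 2 := by omega
    have e2 : 2 + j - 1 = j + 1 := by omega
    have e3 : j + 1 - 1 = j := by omega
    rw [e1, e2, e3]
    simp only [Useq]; ring
  · have hg2V : 0 < g2 (Useq g1 h (m+1) u1) := hg2pos _ (useq_pos hg1pos hu1pos _)
    have h1 := hu1
    rw [discA_eq, div_eq_iff hg2V.ne'] at h1
    show Useq g1 h (m+2-1) u1 - Useq g1 h (m+2-1-1) u1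
        = -(h^2/2) * g1 (Useq g1 h (m+2-1) u1) + h * α * g2 (Useq g1 h (m+2-1) u1)
    have e1 : m + 2 - 1 = m + 1 := by omega
    have e2 : m + 1 - 1 = m := by omega
    rw [e1, e2]
    field_simp [hh0.ne'] at h1
    nlinarith [h1]
end
end
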